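/- arXiv:1006.0116 — 4 statements merged into one kernel-verified Lean document; each statement's English description precedes it below -/
import Mathlib

section
/- The polynomial N = ∏_{s ∈ F_p} (a3 + 3s a2 + 3s² a1 + s³ a0) is isobaric of weight 3 modulo p − 1; moreover N is homogeneous of degree p and its lead monomial in the graded reverse lexicographic order with a0 < a1 < a2 < a3 is a3^p. -/
open MvPolynomial

noncomputable section

/-- The right action of the 2×2 matrix `g` over `F_p` on `F[V] = F[a₃,a₂,a₁,a₀]`
(with `aᵢ = X i`), given by the dual of the third symmetric power representation. -/
def act (p : ℕ) [Fact p.Prime] (F : Type) [Field F] [CharP F p]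
    (g : Matrix (Fin 2) (Fin 2) (ZMod p)) :
    MvPolynomial (Fin 4) F →ₐ[F] MvPolynomial (Fin 4) F :=
  letI c : ZMod p → MvPolynomial (Fin 4) F := fun x => C (ZMod.castHom (dvd_refl p) F x)
  letI al := c (g 0 0)
  letI be := c (g 0 1)
  letI ga := c (g 1 0)
  letI de := c (g 1 1)
  aeval ![
    de ^ 3 * X 0 + 3 * de ^ 2 * ga * X 1 + 3 * de * ga ^ 2 * X 2 + ga ^ 3 * X 3,
    de ^ 2 * be * X 0 + (de ^ 2 * al + 2 * de * be * ga) * X 1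
      + (2 * de * ga * al + be * ga ^ 2) * X 2 + ga ^ 2 * al * X 3,
    de * be ^ 2 * X 0 + (2 * de * be * al + be ^ 2 * ga) * X 1
      + (de * al ^ 2 + 2 * be * ga * al) * X 2 + ga * al ^ 2 * X 3,
    be ^ 3 * X 0 + 3 * be ^ 2 * al * X 1 + 3 * be * al ^ 2 * X 2 + al ^ 3 * X 3]

/-- The transfer with respect to the Sylow `p`-subgroup `P = ⟨σ⟩`,
`tr^P(f) = ∑_{τ ∈ P} (f)τ`, where the elements of `P` are the matrices `[[1,s],[0,1]]`. -/
def trP (p : ℕ) [Fact p.Prime] (F : Type) [Field F] [CharP F p]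
    (f : MvPolynomial (Fin 4) F) : MvPolynomial (Fin 4) F :=
  ∑ s : ZMod p, act p F !![1, s; 0, 1] f

/-- The relative transfer `tr_B^G(f) = ∑_{τ ∈ Q ∪ {η}} (f)τ`, using the coset
representatives `Q ∪ {η}` of the Borel subgroup `B` in `G = SL₂(F_p)`. -/
def trBG (p : ℕ) [Fact p.Prime] (F : Type) [Field F] [CharP F p]
    (f : MvPolynomial (Fin 4) F) : MvPolynomial (Fin 4) F :=
  (∑ s : ZMod p, act p F !![1, 0; s, 1] f) + act p F !![0, 1; -1, 0] f

/-- The full transfer `tr^G(f) = ∑_{τ ∈ SL₂(F_p)} (f)τ`. -/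
def trG (p : ℕ) [Fact p.Prime] (F : Type) [Field F] [CharP F p]
    (f : MvPolynomial (Fin 4) F) : MvPolynomial (Fin 4) F :=
  ∑ g : Matrix.SpecialLinearGroup (Fin 2) (ZMod p), act p F g.1 f

/-- `N = ∏_{τ ∈ P} (a₃)τ = ∏_{s ∈ F_p} (a₃ + 3s a₂ + 3s² a₁ + s³ a₀)`. -/
def Npoly (p : ℕ) [Fact p.Prime] (F : Type) [Field F] [CharP F p] :
    MvPolynomial (Fin 4) F :=
  ∏ s : ZMod p, act p F !![1, s; 0, 1] (X 3)

/-- The weight of the monomial `a₃^e₃ a₂^e₂ a₁^e₁ a₀^e₀`, i.e. `3e₃ + e₂ - e₁ - 3e₀`. -/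
def wt (d : Fin 4 →₀ ℕ) : ℤ :=
  3 * (d 3 : ℤ) + (d 2 : ℤ) - (d 1 : ℤ) - 3 * (d 0 : ℤ)

/-- `f` is isobaric of weight `lam` modulo `p - 1`: every monomial occurring in `f`
has weight congruent to `lam` modulo `p - 1`. -/
def Isobaric (p : ℕ) {F : Type} [Field F] (f : MvPolynomial (Fin 4) F) (lam : ℤ) : Prop :=
  ∀ d ∈ f.support, ((p : ℤ) - 1) ∣ (wt d - lam)

/-- Strict grevlex comparison on exponent vectors, for the graded reverse
lexicographic order with `a₀ < a₁ < a₂ < a₃`. -/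
def grevlexLt (d e : Fin 4 →₀ ℕ) : Prop :=
  (∑ i : Fin 4, d i) < (∑ i : Fin 4, e i) ∨
    ((∑ i : Fin 4, d i) = (∑ i : Fin 4, e i) ∧
      ∃ k : Fin 4, e k < d k ∧ ∀ j : Fin 4, j < k → d j = e j)

/-- `d` is the lead monomial of `f` in the grevlex order with `a₀ < a₁ < a₂ < a₃`. -/
def LeadMonomialIs {F : Type} [Field F] (f : MvPolynomial (Fin 4) F) (d : Fin 4 →₀ ℕ) : Prop :=
  coeff d f ≠ 0 ∧ ∀ e ∈ f.support, e ≠ d → grevlexLt e d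

/-- The lead term of `f` is `c · x^d` in the grevlex order with `a₀ < a₁ < a₂ < a₃`. -/
def LeadTermIs {F : Type} [Field F] (f : MvPolynomial (Fin 4) F) (c : F) (d : Fin 4 →₀ ℕ) :
    Prop :=
  LeadMonomialIs f d ∧ coeff d f = c

/-- The discriminant `D` of the binary cubic. -/
def Dpoly (F : Type) [Field F] : MvPolynomial (Fin 4) F :=
  3 * X 2 ^ 2 * X 1 ^ 2 - 4 * X 3 * X 1 ^ 3 - 4 * X 2 ^ 3 * X 0
    + 6 * X 3 * X 2 * X 1 * X 0 - X 3 ^ 2 * X 0 ^ 2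

/-- `K = -tr^G(a₁^{p-1})`. -/
def Kpoly (p : ℕ) [Fact p.Prime] (F : Type) [Field F] [CharP F p] :
    MvPolynomial (Fin 4) F :=
  - trG p F (X 1 ^ (p - 1))

/-- Dickson's invariant `L = 3(a₂^p a₁ - a₂ a₁^p) - (a₃^p a₀ - a₃ a₀^p)`. -/
def Lpoly (p : ℕ) (F : Type) [Field F] : MvPolynomial (Fin 4) F :=
  3 * (X 2 ^ p * X 1 - X 2 * X 1 ^ p) - (X 3 ^ p * X 0 - X 3 * X 0 ^ p)

/-- `e = 2a₁³ + a₀(a₃a₀ - 3a₂a₁)`. -/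
def epoly (F : Type) [Field F] : MvPolynomial (Fin 4) F :=
  2 * X 1 ^ 3 + X 0 * (X 3 * X 0 - 3 * X 2 * X 1)

/-- `d = a₁² - a₂a₀`. -/
def dpoly (F : Type) [Field F] : MvPolynomial (Fin 4) F :=
  X 1 ^ 2 - X 2 * X 0

/-- `ξ = 3a₂² - 4a₃a₁`. -/
def xipoly (F : Type) [Field F] : MvPolynomial (Fin 4) F :=
  3 * X 2 ^ 2 - 4 * X 3 * X 1

/-- The ring of `SL₂(F_p)`-invariants `F[V]^{SL₂(F_p)}`, as a subalgebra of `F[V]`. -/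
def invariants (p : ℕ) [Fact p.Prime] (F : Type) [Field F] [CharP F p] :
    Subalgebra F (MvPolynomial (Fin 4) F) where
  carrier := {f | ∀ g : Matrix.SpecialLinearGroup (Fin 2) (ZMod p), act p F g.1 f = f}
  mul_mem' := fun hf hg g => by rw [map_mul, hf g, hg g]
  one_mem' := fun g => map_one _
  add_mem' := fun hf hg g => by rw [map_add, hf g, hg g]
  zero_mem' := fun g => map_zero _
  algebraMap_mem' := fun c g => (act _ _ _).commutes c

variable (p : ℕ) [Fact p.Prime] (F : Type) [Field F] [CharP F p]

/-- the factor -/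
def gfac (s : ZMod p) : MvPolynomial (Fin 4) F :=
  C ((ZMod.castHom (dvd_refl p) F s)^3) * X 0 + C (3 * (ZMod.castHom (dvd_refl p) F s)^2) * X 1
    + C (3 * ZMod.castHom (dvd_refl p) F s) * X 2 + X 3

lemma act_upper (s : ZMod p) : act p F !![1, s; 0, 1] (X 3) = gfac p F s := by
  simp [act, gfac, Matrix.cons_val', Matrix.cons_val_zero, Matrix.cons_val_one, Matrix.head_cons]
  rw [map_ofNat]


lemma homog_CX (a : F) (i : Fin 4) : (C a * X i : MvPolynomial (Fin 4) F).IsHomogeneous 1 := by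
  simpa using (isHomogeneous_C (Fin 4) a).mul (isHomogeneous_X F i)

lemma gfac_homog (s : ZMod p) : (gfac p F s).IsHomogeneous 1 := by
  unfold gfac
  exact (((homog_CX F _ 0).add (homog_CX F _ 1)).add (homog_CX F _ 2)).add (isHomogeneous_X F 3)

lemma Npoly_homog : (Npoly p F).IsHomogeneous p := by
  unfold Npoly
  have : ∀ s : ZMod p, act p F !![1, s; 0, 1] (X 3 : MvPolynomial (Fin 4) F) = gfac p F s :=
    act_upper p F
  simp_rw [this]
  have := MvPolynomial.IsHomogeneous.prod Finset.univ (fun s : ZMod p => gfac p F s)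
    (fun _ => 1) (fun s _ => gfac_homog p F s)
  simpa [ZMod.card] using this

lemma eval_gfac (s : ZMod p) : eval ![0,0,0,1] (gfac p F s) = 1 := by
  simp [gfac]

lemma degree_eq_four (b : Fin 4 →₀ ℕ) : b.degree = b 0 + b 1 + b 2 + b 3 := by
  rw [Finsupp.degree_apply, Finset.sum_subset (Finset.subset_univ _)
    (fun i _ hi => by simpa using (Finsupp.notMem_support_iff.mp hi)), Fin.sum_univ_four]

lemma coeff_single3_eq_eval (f : MvPolynomial (Fin 4) F) (n : ℕ) (hf : f.IsHomogeneous n)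
    (hn : 0 < n) : coeff (Finsupp.single 3 n) f = eval ![0,0,0,1] f := by
  rw [eval_eq']
  rw [Finset.sum_eq_single (Finsupp.single 3 n)]
  · by_cases h : Finsupp.single (3 : Fin 4) n ∈ f.support
    · simp [Fin.prod_univ_four, Finsupp.single_eq_of_ne, (by decide : (0:Fin 4) ≠ 3),
        (by decide : (1:Fin 4) ≠ 3), (by decide : (2:Fin 4) ≠ 3)]
    · rw [MvPolynomial.notMem_support_iff.mp h]; ring
  · intro b hb hne
    have hdeg : b 0 + b 1 + b 2 + b 3 = n := by
      rw [← degree_eq_four]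
      by_contra hc
      exact MvPolynomial.mem_support_iff.mp hb (hf.coeff_eq_zero hc)
    have h012 : b 0 ≠ 0 ∨ b 1 ≠ 0 ∨ b 2 ≠ 0 := by
      by_contra hc
      push_neg at hc
      apply hne
      ext i
      fin_cases i
      · simp [hc.1, Finsupp.single_eq_of_ne, (by decide : (0:Fin 4) ≠ 3)]
      · simp [hc.2.1, Finsupp.single_eq_of_ne, (by decide : (1:Fin 4) ≠ 3)]
      · simp [hc.2.2, Finsupp.single_eq_of_ne, (by decide : (2:Fin 4) ≠ 3)]
      · simp; omega
    rw [Fin.prod_univ_four]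
    rcases h012 with h | h | h <;>
      simp [Matrix.cons_val_zero, Matrix.cons_val_one, zero_pow h]
  · intro h
    rw [MvPolynomial.notMem_support_iff.mp h]; ring

lemma coeff_Npoly_top : coeff (Finsupp.single 3 p) (Npoly p F) = 1 := by
  rw [coeff_single3_eq_eval F _ p (Npoly_homog p F) (Fact.out : p.Prime).pos]
  unfold Npoly
  simp_rw [act_upper p F]
  rw [map_prod]
  simp [eval_gfac]

lemma coeff_scale (c : Fin 4 → F) (f : MvPolynomial (Fin 4) F) (d : Fin 4 →₀ ℕ) :
    coeff d (aeval (fun i => C (c i) * X i) f) = (∏ i, c i ^ d i) * coeff d f := by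
  induction f using MvPolynomial.induction_on' with
  | monomial u a =>
    rw [aeval_monomial]
    have : (u.prod fun i k => (C (c i) * X i) ^ k)
        = C (∏ i, c i ^ u i) * (u.prod fun i k => (X i : MvPolynomial (Fin 4) F) ^ k) := by
      rw [Finsupp.prod, Finsupp.prod]
      rw [show (∏ i, c i ^ u i) = ∏ i ∈ u.support, c i ^ u i from
        (Finset.prod_subset (Finset.subset_univ _)
          (fun i _ hi => by simp [Finsupp.notMem_support_iff.mp hi])).symm]
      rw [map_prod, ← Finset.prod_mul_distrib]
      exact Finset.prod_congr rfl (fun i _ => by rw [mul_pow, C_pow])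
    rw [this, algebraMap_eq, ← mul_assoc, ← C_mul, ← monomial_eq]
    simp only [coeff_monomial]
    split_ifs with h
    · subst h; ring
    · ring
  | add f g hf hg =>
    rw [map_add, coeff_add, coeff_add, hf, hg]; ring

def scaleU (w : F) : MvPolynomial (Fin 4) F →ₐ[F] MvPolynomial (Fin 4) F :=
  aeval (fun i => C ((![1, w^2, w^4, w^6] : Fin 4 → F) i) * X i)

lemma scaleU_gfac (ω : (ZMod p)ˣ) (s : ZMod p) :
    scaleU F (ZMod.castHom (dvd_refl p) F (ω : ZMod p)) (gfac p F s)
      = C ((ZMod.castHom (dvd_refl p) F (ω : ZMod p))^6)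
          * gfac p F (s * ((ω⁻¹ : (ZMod p)ˣ) : ZMod p)^2) := by
  set φ := ZMod.castHom (dvd_refl p) F with hφ
  have ht : φ ((ω⁻¹ : (ZMod p)ˣ) : ZMod p) * φ (ω : ZMod p) = 1 := by
    rw [← map_mul, ← Units.val_mul, inv_mul_cancel, Units.val_one, map_one]
  have hC : (C (φ ((ω⁻¹ : (ZMod p)ˣ) : ZMod p)) * C (φ (ω : ZMod p))
      : MvPolynomial (Fin 4) F) = 1 := by
    rw [← map_mul, ht, map_one]
  set P : MvPolynomial (Fin 4) F := C (φ (s : ZMod p))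
  set A : MvPolynomial (Fin 4) F := C (φ ((ω⁻¹ : (ZMod p)ˣ) : ZMod p))
  set W : MvPolynomial (Fin 4) F := C (φ (ω : ZMod p))
  unfold scaleU gfac
  simp only [map_add, map_mul, map_pow, aeval_X, aeval_C, algebraMap_eq, map_one, map_ofNat,
    Matrix.cons_val_zero, Matrix.cons_val_one, Matrix.head_cons, Matrix.cons_val_two,
    Matrix.tail_cons, Matrix.cons_val_three, Matrix.cons_val_fin_one]
  linear_combination (-(P^3)*(X 0)*((A*W)^5+(A*W)^4+(A*W)^3+(A*W)^2+(A*W)+1)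
    - 3*P^2*W^2*(X 1)*((A*W)^3+(A*W)^2+(A*W)+1)
    - 3*P*W^4*(X 2)*((A*W)+1)) * hC

lemma scaleU_Npoly (ω : (ZMod p)ˣ) :
    scaleU F (ZMod.castHom (dvd_refl p) F (ω : ZMod p)) (Npoly p F)
      = C ((ZMod.castHom (dvd_refl p) F (ω : ZMod p))^(6*p)) * Npoly p F := by
  unfold Npoly
  simp_rw [act_upper p F]
  rw [map_prod]
  simp_rw [scaleU_gfac p F ω]
  rw [Finset.prod_mul_distrib, Finset.prod_const]
  have hcard : (Finset.univ : Finset (ZMod p)).card = p := by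
    simpa using ZMod.card p
  rw [hcard, ← map_pow, ← pow_mul]
  congr 1
  have hne : (((ω⁻¹ : (ZMod p)ˣ) : ZMod p))^2 ≠ 0 := pow_ne_zero _ (Units.ne_zero _)
  exact Equiv.prod_comp (Equiv.mulRight₀ _ hne) (fun x => gfac p F x)


lemma Npoly_isobaric (hp : 3 < p) (d : Fin 4 →₀ ℕ) (hd : d ∈ (Npoly p F).support) :
    ((p : ℤ) - 1) ∣ (wt d - 3) := by
  have hcoeff : coeff d (Npoly p F) ≠ 0 := MvPolynomial.mem_support_iff.mp hd
  have hdeg : d 0 + d 1 + d 2 + d 3 = p := by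
    rw [← degree_eq_four]
    by_contra hc
    exact hcoeff ((Npoly_homog p F).coeff_eq_zero hc)
  obtain ⟨g, hg⟩ := IsCyclic.exists_generator (α := (ZMod p)ˣ)
  set φ := ZMod.castHom (dvd_refl p) F with hφ
  set w : F := φ (g : ZMod p) with hw
  -- coefficient identity from the torus action
  have h1 : (∏ i, (![1, w^2, w^4, w^6] : Fin 4 → F) i ^ d i) * coeff d (Npoly p F)
      = w ^ (6 * p) * coeff d (Npoly p F) := by
    rw [← coeff_scale]
    have := scaleU_Npoly p F g
    rw [hφ] at *
    rw [show (aeval fun i => C ((![1, w ^ 2, w ^ 4, w ^ 6] : Fin 4 → F) i) * X i)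
        (Npoly p F) = scaleU F w (Npoly p F) from rfl, this, coeff_C_mul]
  have hprod : (∏ i, (![1, w^2, w^4, w^6] : Fin 4 → F) i ^ d i)
      = w ^ (2 * d 1 + 4 * d 2 + 6 * d 3) := by
    rw [Fin.prod_univ_four]
    simp only [Matrix.cons_val_zero, Matrix.cons_val_one, Matrix.head_cons,
      Matrix.cons_val_two, Matrix.tail_cons, Matrix.cons_val_three, Matrix.cons_val_fin_one]
    rw [one_pow, ← pow_mul, ← pow_mul, ← pow_mul, one_mul, ← pow_add, ← pow_add]
  rw [hprod] at h1
  have hpow : w ^ (2 * d 1 + 4 * d 2 + 6 * d 3) = w ^ (6 * p) :=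
    mul_right_cancel₀ hcoeff h1
  -- lift to units
  set uw : Fˣ := Units.map (φ : ZMod p →+* F).toMonoidHom g with huw
  have hupow : uw ^ (2 * d 1 + 4 * d 2 + 6 * d 3) = uw ^ (6 * p) := by
    apply Units.ext
    simpa [huw] using hpow
  have horder : orderOf uw = p - 1 := by
    have hinj : Function.Injective (Units.map (φ : ZMod p →+* F).toMonoidHom) :=
      Units.map_injective (RingHom.injective φ)
    rw [orderOf_injective _ hinj g]
    rw [orderOf_eq_card_of_forall_mem_zpowers hg, Nat.card_eq_fintype_card, ZMod.card_units]
  have hmod : (2 * d 1 + 4 * d 2 + 6 * d 3) ≡ 6 * p [MOD p - 1] := by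
    rw [← horder]
    exact (pow_eq_pow_iff_modEq).mp hupow
  obtain ⟨k, hk⟩ := hmod.dvd
  have hp1 : (1:ℕ) ≤ p := by omega
  rw [Nat.cast_sub hp1] at hk
  push_cast at hk
  refine ⟨3 - k, ?_⟩
  have hdegz : (d 0 : ℤ) + d 1 + d 2 + d 3 = p := by exact_mod_cast hdeg
  unfold wt
  push_cast
  linarith [hk, hdegz]


/-- `N = ∏_{s ∈ F_p} (a₃ + 3s a₂ + 3s² a₁ + s³ a₀)` is isobaric of weight `3`
modulo `p - 1`, homogeneous of degree `p`, and its lead monomial in the grevlex order with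
`a₀ < a₁ < a₂ < a₃` is `a₃^p`. -/
theorem Npoly_isobaric_homogeneous_leadMonomial (p : ℕ) [Fact p.Prime] (hp : 3 < p)
    (F : Type) [Field F] [CharP F p] :
    Isobaric p (Npoly p F) 3 ∧ (Npoly p F).IsHomogeneous p ∧
      LeadMonomialIs (Npoly p F) (Finsupp.single 3 p) := by
  have hs0 : (Finsupp.single (3:Fin 4) p) 0 = 0 := Finsupp.single_eq_of_ne (by decide)
  have hs1 : (Finsupp.single (3:Fin 4) p) 1 = 0 := Finsupp.single_eq_of_ne (by decide)
  have hs2 : (Finsupp.single (3:Fin 4) p) 2 = 0 := Finsupp.single_eq_of_ne (by decide)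
  have hs3 : (Finsupp.single (3:Fin 4) p) 3 = p := Finsupp.single_eq_same
  refine ⟨fun d hd => Npoly_isobaric p F hp d hd, Npoly_homog p F, ?_, ?_⟩
  · rw [coeff_Npoly_top]; exact one_ne_zero
  · intro e he hne
    have hdeg : e 0 + e 1 + e 2 + e 3 = p := by
      rw [← degree_eq_four]
      by_contra hc
      exact (MvPolynomial.mem_support_iff.mp he) ((Npoly_homog p F).coeff_eq_zero hc)
    right
    constructor
    · rw [Fin.sum_univ_four, Fin.sum_univ_four, hs0, hs1, hs2, hs3]
      omega
    · by_cases h0 : e 0 ≠ 0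
      · refine ⟨0, ?_, ?_⟩
        · rw [hs0]; exact Nat.pos_of_ne_zero h0
        · intro j hj
          rw [Fin.lt_def] at hj
          exact absurd hj (by omega)
      · push_neg at h0
        by_cases h1 : e 1 ≠ 0
        · refine ⟨1, ?_, ?_⟩
          · rw [hs1]; exact Nat.pos_of_ne_zero h1
          · intro j hj
            rw [Fin.lt_def] at hj
            fin_cases j
            · simpa [Finsupp.single_apply] using h0
            · exact absurd hj (by norm_num)
            · exact absurd hj (by norm_num)
            · exact absurd hj (by norm_num)
        · push_neg at h1
          have h2 : e 2 ≠ 0 := by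
            intro h2
            apply hne
            ext i
            fin_cases i
            · simpa [Finsupp.single_apply] using h0
            · simpa [Finsupp.single_apply] using h1
            · simpa [Finsupp.single_apply] using h2
            · have h3 : e 3 = p := by omega
              simpa [Finsupp.single_apply] using h3
          refine ⟨2, ?_, ?_⟩
          · rw [hs2]; exact Nat.pos_of_ne_zero h2
          · intro j hj
            rw [Fin.lt_def] at hj
            fin_cases j
            · simpa [Finsupp.single_apply] using h0
            · simpa [Finsupp.single_apply] using h1
            · exact absurd hj (by norm_num)
            · exact absurd hj (by norm_num)

end
end

section
/- The polynomial N · a0 is invariant under the action of SL2(F_p); that is, N · a0 ∈ F[V]^{SL2(F_p)}. -/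
open MvPolynomial

noncomputable section

set_option maxHeartbeats 2000000

section Aux

variable {p : ℕ} [Fact p.Prime] {F : Type} [Field F] [CharP F p]

local notation "cZ" => fun x : ZMod p => (C ((ZMod.castHom (dvd_refl p) F) x) : MvPolynomial (Fin 4) F)

lemma act_comp (g h : Matrix (Fin 2) (Fin 2) (ZMod p)) :
    (act p F h).comp (act p F g) = act p F (g * h) := by
  apply MvPolynomial.algHom_ext
  intro i
  have hi : i = 0 ∨ i = 1 ∨ i = 2 ∨ i = 3 := by fin_cases i <;> simp
  rcases hi with rfl | rfl | rfl | rfl <;>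
    · simp only [AlgHom.coe_comp, Function.comp_apply, act, MvPolynomial.algebraMap_eq, aeval_X,
        Matrix.cons_val_zero, Matrix.cons_val_one, Matrix.cons_val_two, Matrix.cons_val_three,
        Matrix.head_cons, Matrix.tail_cons, map_add, map_mul, map_pow,
        map_ofNat, aeval_C, Matrix.mul_apply, Fin.sum_univ_two]
      ring

lemma act_act (g h : Matrix (Fin 2) (Fin 2) (ZMod p)) (f : MvPolynomial (Fin 4) F) :
    act p F h (act p F g f) = act p F (g * h) f := by
  rw [← act_comp]; rfl

lemma act_one (f : MvPolynomial (Fin 4) F) : act p F 1 f = f := by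
  have : act p F 1 = AlgHom.id F (MvPolynomial (Fin 4) F) := by
    apply MvPolynomial.algHom_ext
    intro i
    have hi : i = 0 ∨ i = 1 ∨ i = 2 ∨ i = 3 := by fin_cases i <;> simp
    rcases hi with rfl | rfl | rfl | rfl <;>
      simp [act, Matrix.one_apply]
  rw [this]; rfl

lemma act_lower_X3 (a c d : ZMod p) :
    act p F !![a, 0; c, d] (X 3) = cZ a ^ 3 * X 3 := by
  simp [act]

lemma act_diag_X0 (a d : ZMod p) :
    act p F !![a, 0; 0, d] (X 0) = cZ d ^ 3 * X 0 := by
  simp [act]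

lemma act_u_X0 (s : ZMod p) : act p F !![1, s; 0, 1] (X 0) = X 0 := by
  simp [act]

lemma act_u0_X3 : act p F !![1, 0; 0, 1] (X 3) = X 3 := by
  simp [act]

lemma act_eta_X3 : act p F !![0, 1; -1, 0] (X 3) = X 0 := by
  simp [act]

lemma act_eta_X0 : act p F !![0, 1; -1, 0] (X 0) = - X 3 := by
  have h1 : (ZMod.castHom (dvd_refl p) F) (-1) = -1 := by rw [map_neg, map_one]
  simp only [act] 
  simp [h1]
  ring

lemma act_C (g : Matrix (Fin 2) (Fin 2) (ZMod p)) (k : F) :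
    act p F g (C k) = C k := by
  simp [act, MvPolynomial.algebraMap_eq]


-- matrix identities
lemma u_mul_u (s t : ZMod p) :
    (!![1, s; 0, 1] : Matrix (Fin 2) (Fin 2) (ZMod p)) * !![1, t; 0, 1] = !![1, s + t; 0, 1] := by
  ext i j
  fin_cases i <;> fin_cases j <;> simp [Matrix.mul_apply, Fin.sum_univ_two] <;> ring

lemma u_zero_eq_one : (!![1, 0; 0, 1] : Matrix (Fin 2) (Fin 2) (ZMod p)) = 1 := by
  ext i j
  fin_cases i <;> fin_cases j <;> simp [Matrix.one_apply]

lemma u_mul_diag (s a d : ZMod p) (h : a * d = 1) :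
    (!![1, s; 0, 1] : Matrix (Fin 2) (Fin 2) (ZMod p)) * !![a, 0; 0, d]
      = !![a, 0; 0, d] * !![1, s * d * d; 0, 1] := by
  ext i j
  fin_cases i <;> fin_cases j <;>
    simp [Matrix.mul_apply, Fin.sum_univ_two] <;>
    first
      | ring1
      | linear_combination (-(s * d)) * h
      | linear_combination (s * d) * h

lemma u_mul_eta (s : ZMod p) (hs : s ≠ 0) :
    (!![1, s; 0, 1] : Matrix (Fin 2) (Fin 2) (ZMod p)) * !![0, 1; -1, 0]
      = !![-s, 0; -1, -s⁻¹] * !![1, -s⁻¹; 0, 1] := by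
  have h : s * s⁻¹ = 1 := mul_inv_cancel₀ hs
  ext i j
  fin_cases i <;> fin_cases j <;>
    simp [Matrix.mul_apply, Fin.sum_univ_two] <;>
    first
      | ring1
      | linear_combination -h
      | linear_combination h

lemma lower_decomp (c : ZMod p) :
    (!![0, 1; -1, 0] : Matrix (Fin 2) (Fin 2) (ZMod p)) * !![1, -c; 0, 1] * !![0, 1; -1, 0]
        * !![-1, 0; 0, -1] = !![1, 0; c, 1] := by
  ext i j
  fin_cases i <;> fin_cases j <;> simp [Matrix.mul_apply, Fin.sum_univ_two]

lemma transvec01 (c : ZMod p) :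
    Matrix.transvection (0 : Fin 2) 1 c = !![1, c; 0, 1] := by
  ext i j
  fin_cases i <;> fin_cases j <;>
    simp [Matrix.transvection, Matrix.single, Matrix.one_apply]

lemma transvec10 (c : ZMod p) :
    Matrix.transvection (1 : Fin 2) 0 c = !![1, 0; c, 1] := by
  ext i j
  fin_cases i <;> fin_cases j <;>
    simp [Matrix.transvection, Matrix.single, Matrix.one_apply]

lemma diag_eq (D : Fin 2 → ZMod p) :
    Matrix.diagonal D = !![D 0, 0; 0, D 1] := by
  ext i j
  fin_cases i <;> fin_cases j <;> simp [Matrix.diagonal]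

lemma prod_erase_zero : (∏ s ∈ Finset.univ.erase (0 : ZMod p), s) = -1 := by
  have h := FiniteField.prod_univ_units_id_eq_neg_one (K := ZMod p)
  have h2 : ((∏ x : (ZMod p)ˣ, x : (ZMod p)ˣ) : ZMod p) = ∏ x : (ZMod p)ˣ, (x : ZMod p) :=
    map_prod (Units.coeHom (ZMod p)) _ _
  rw [h] at h2
  have h3 : ∏ x : (ZMod p)ˣ, (x : ZMod p) = -1 := by
    rw [← h2]; simp
  rw [← h3]
  refine Finset.prod_bij' (fun a ha => Units.mk0 a (Finset.ne_of_mem_erase ha))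
    (fun u _ => (u : ZMod p)) (fun a ha => Finset.mem_univ _)
    (fun u hu => Finset.mem_erase.2 ⟨Units.ne_zero u, Finset.mem_univ _⟩)
    (fun a ha => rfl) (fun u hu => Units.mk0_val u _) (fun a ha => rfl)


lemma Npoly_u (t : ZMod p) :
    act p F !![1, t; 0, 1] (Npoly p F * X 0) = Npoly p F * X 0 := by
  rw [map_mul, act_u_X0]
  congr 1
  rw [Npoly, map_prod]
  have h1 : ∀ s : ZMod p, act p F !![1, t; 0, 1] (act p F !![1, s; 0, 1] (X 3 : MvPolynomial (Fin 4) F))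
      = act p F !![1, s + t; 0, 1] (X 3) := by
    intro s
    rw [act_act, u_mul_u]
  simp only [h1]
  exact Fintype.prod_equiv (Equiv.addRight t) _ _ (fun s => rfl)

lemma Npoly_diag (a d : ZMod p) (h : a * d = 1) :
    act p F !![a, 0; 0, d] (Npoly p F * X 0) = Npoly p F * X 0 := by
  have key : act p F !![a, 0; 0, d] (Npoly p F)
      = (C ((ZMod.castHom (dvd_refl p) F) a)) ^ (3 * p) * Npoly p F := by
    rw [Npoly, map_prod]
    have h1 : ∀ s : ZMod p,
        act p F !![a, 0; 0, d] (act p F !![1, s; 0, 1] (X 3 : MvPolynomial (Fin 4) F))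
        = (C ((ZMod.castHom (dvd_refl p) F) a)) ^ 3
            * act p F !![1, s * d * d; 0, 1] (X 3) := by
      intro s
      rw [act_act, u_mul_diag s a d h, ← act_act, act_lower_X3, map_mul, map_pow, act_C]
    have h2 : (∏ s : ZMod p, act p F !![1, s * d * d; 0, 1] (X 3 : MvPolynomial (Fin 4) F))
        = ∏ s : ZMod p, act p F !![1, s; 0, 1] (X 3 : MvPolynomial (Fin 4) F) := by
      refine Finset.prod_nbij' (fun s : ZMod p => s * d * d) (fun s : ZMod p => s * a * a)
        (fun _ _ => Finset.mem_univ _) (fun _ _ => Finset.mem_univ _) ?_ ?_ ?_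
      · intro s _
        linear_combination (s * a * d + s) * h
      · intro s _
        linear_combination (s * a * d + s) * h
      · intro s _; rfl
    simp only [h1]
    rw [Finset.prod_mul_distrib, Finset.prod_const, Finset.card_univ, ZMod.card, ← pow_mul, h2]
  have hZ : a ^ (3 * p) * d ^ 3 = 1 := by
    rw [mul_comm 3 p, pow_mul, ZMod.pow_card, ← mul_pow, h, one_pow]
  have hsc : (C ((ZMod.castHom (dvd_refl p) F) a) : MvPolynomial (Fin 4) F) ^ (3 * p)
      * (C ((ZMod.castHom (dvd_refl p) F) d)) ^ 3 = 1 := by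
    have h2 := congrArg
      (fun z => (C ((ZMod.castHom (dvd_refl p) F) z) : MvPolynomial (Fin 4) F)) hZ
    simpa [map_mul, map_pow] using h2
  rw [map_mul, act_diag_X0, key]
  linear_combination (Npoly p F * (X 0 : MvPolynomial (Fin 4) F)) * hsc


lemma Npoly_eta :
    act p F !![0, 1; -1, 0] (Npoly p F * X 0) = Npoly p F * X 0 := by
  have hsplitN : Npoly p F = (X 3 : MvPolynomial (Fin 4) F)
      * ∏ s ∈ Finset.univ.erase (0 : ZMod p), act p F !![1, s; 0, 1] (X 3) := by
    rw [Npoly, ← Finset.mul_prod_erase Finset.univ _ (Finset.mem_univ (0 : ZMod p)), act_u0_X3]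
  have heta : act p F !![0, 1; -1, 0] (Npoly p F)
      = - ((X 0 : MvPolynomial (Fin 4) F)
          * ∏ s ∈ Finset.univ.erase (0 : ZMod p), act p F !![1, s; 0, 1] (X 3)) := by
    rw [Npoly, map_prod, ← Finset.mul_prod_erase Finset.univ _ (Finset.mem_univ (0 : ZMod p)),
      act_u0_X3, act_eta_X3]
    have h1 : ∀ s ∈ Finset.univ.erase (0 : ZMod p),
        act p F !![0, 1; -1, 0] (act p F !![1, s; 0, 1] (X 3 : MvPolynomial (Fin 4) F))
        = (C ((ZMod.castHom (dvd_refl p) F) (-s))) ^ 3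
            * act p F !![1, -s⁻¹; 0, 1] (X 3) := by
      intro s hs
      have hs0 : s ≠ 0 := Finset.ne_of_mem_erase hs
      rw [act_act, u_mul_eta s hs0, ← act_act, act_lower_X3, map_mul, map_pow, act_C]
    rw [Finset.prod_congr rfl h1, Finset.prod_mul_distrib]
    have h2 : (∏ s ∈ Finset.univ.erase (0 : ZMod p),
        (C ((ZMod.castHom (dvd_refl p) F) (-s)) : MvPolynomial (Fin 4) F) ^ 3) = -1 := by
      rw [Finset.prod_pow]
      have h3 : (∏ s ∈ Finset.univ.erase (0 : ZMod p),
          (C ((ZMod.castHom (dvd_refl p) F) (-s)) : MvPolynomial (Fin 4) F))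
          = ∏ s ∈ Finset.univ.erase (0 : ZMod p),
            (C ((ZMod.castHom (dvd_refl p) F) s) : MvPolynomial (Fin 4) F) := by
        refine Finset.prod_nbij' (fun s : ZMod p => -s) (fun s : ZMod p => -s) ?_ ?_ ?_ ?_ ?_
        · intro a ha
          exact Finset.mem_erase.2 ⟨neg_ne_zero.2 (Finset.ne_of_mem_erase ha), Finset.mem_univ _⟩
        · intro a ha
          exact Finset.mem_erase.2 ⟨neg_ne_zero.2 (Finset.ne_of_mem_erase ha), Finset.mem_univ _⟩
        · intro a _; simp
        · intro a _; simp
        · intro a _; rfl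
      rw [h3, ← map_prod (C : F →+* MvPolynomial (Fin 4) F),
        ← map_prod (ZMod.castHom (dvd_refl p) F), prod_erase_zero]
      have h5 : (ZMod.castHom (dvd_refl p) F) (-1) = -1 := by rw [map_neg, map_one]
      rw [h5, map_neg, map_one]
      ring
    have h4 : (∏ s ∈ Finset.univ.erase (0 : ZMod p),
        act p F !![1, -s⁻¹; 0, 1] (X 3 : MvPolynomial (Fin 4) F))
        = ∏ s ∈ Finset.univ.erase (0 : ZMod p),
          act p F !![1, s; 0, 1] (X 3 : MvPolynomial (Fin 4) F) := by
      refine Finset.prod_nbij' (fun s : ZMod p => -s⁻¹) (fun s : ZMod p => -s⁻¹) ?_ ?_ ?_ ?_ ?_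
      · intro a ha
        exact Finset.mem_erase.2
          ⟨neg_ne_zero.2 (inv_ne_zero (Finset.ne_of_mem_erase ha)), Finset.mem_univ _⟩
      · intro a ha
        exact Finset.mem_erase.2
          ⟨neg_ne_zero.2 (inv_ne_zero (Finset.ne_of_mem_erase ha)), Finset.mem_univ _⟩
      · intro a _; rw [inv_neg, inv_inv, neg_neg]
      · intro a _; rw [inv_neg, inv_inv, neg_neg]
      · intro a _; rfl
    rw [h2, h4]
    ring
  rw [map_mul, heta, act_eta_X0]
  rw [hsplitN]
  ring


lemma Npoly_lower (c : ZMod p) :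
    act p F !![1, 0; c, 1] (Npoly p F * X 0) = Npoly p F * X 0 := by
  have hneg : ((-1 : ZMod p)) * (-1) = 1 := by ring
  rw [← lower_decomp c, ← act_act, ← act_act, ← act_act, Npoly_eta, Npoly_u, Npoly_eta,
    Npoly_diag (-1) (-1) hneg]

lemma inv_transvec (t : Matrix.TransvectionStruct (Fin 2) (ZMod p)) :
    act p F t.toMatrix (Npoly p F * X 0) = Npoly p F * X 0 := by
  obtain ⟨i, j, hij, c⟩ := t
  rw [Matrix.TransvectionStruct.toMatrix_mk]
  fin_cases i <;> fin_cases j <;> simp only [Fin.zero_eta, Fin.mk_one] at hij ⊢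
  · exact absurd rfl hij
  · rw [transvec01]; exact Npoly_u c
  · rw [transvec10]; exact Npoly_lower c
  · exact absurd rfl hij

lemma inv_list (L : List (Matrix.TransvectionStruct (Fin 2) (ZMod p))) :
    act p F (L.map Matrix.TransvectionStruct.toMatrix).prod (Npoly p F * X 0)
      = Npoly p F * X 0 := by
  induction L with
  | nil => rw [List.map_nil, List.prod_nil]; exact act_one _
  | cons t tl ih => rw [List.map_cons, List.prod_cons, ← act_act, inv_transvec, ih]

end Aux

/-- `N · a₀` is invariant under the action of `SL₂(F_p)`. -/
theorem Npoly_mul_a0_invariant (p : ℕ) [Fact p.Prime] (hp : 3 < p)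
    (F : Type) [Field F] [CharP F p] :
    ∀ g : Matrix.SpecialLinearGroup (Fin 2) (ZMod p),
      act p F g.1 (Npoly p F * X 0) = Npoly p F * X 0 := by
  intro g
  obtain ⟨L, L', D, hM⟩ := Matrix.Pivot.exists_list_transvec_mul_diagonal_mul_list_transvec g.1
  have hdet : D 0 * D 1 = 1 := by
    have h1 := g.2
    rw [hM, Matrix.det_mul, Matrix.det_mul, Matrix.TransvectionStruct.det_toMatrix_prod,
      Matrix.TransvectionStruct.det_toMatrix_prod, Matrix.det_diagonal,
      Fin.prod_univ_two, one_mul, mul_one] at h1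
    exact h1
  rw [hM, ← act_act, ← act_act, inv_list, diag_eq, Npoly_diag (D 0) (D 1) hdet, inv_list]


end
end

section
/- For every integer j ≥ 1, setting m = 2 + ⌊3j/(p−1)⌋, the lead monomial (graded reverse lexicographic order with a0 < a1 < a2 < a3) of tr_B^G(N^j · tr^P(a2^{(m−1)(p−1)−3j} a3^{p−1})) equals a3^{pj} a2^{m(p−1)−3j}. -/
open MvPolynomial

noncomputable section

section Aux

variable (p : ℕ) [Fact p.Prime] (F : Type) [Field F] [CharP F p]

/-- `C ∘ cast : ZMod p →+* F[V]`. -/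
private def cm : ZMod p →+* MvPolynomial (Fin 4) F :=
  (C : F →+* MvPolynomial (Fin 4) F).comp (ZMod.castHom (dvd_refl p) F)

/-- The projection setting `a₀ = a₁ = 0`. -/
private def pr : MvPolynomial (Fin 4) F →ₐ[F] MvPolynomial (Fin 4) F :=
  aeval ![0, 0, X 2, X 3]

private lemma cast_three : (ZMod.cast (3 : ZMod p) : F) = 3 := by
  have h : ((3 : ℕ) : ZMod p) = (3 : ZMod p) := by norm_cast
  rw [← h, ZMod.cast_natCast']
  norm_num

private lemma cast_two : (ZMod.cast (2 : ZMod p) : F) = 2 := by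
  have h : ((2 : ℕ) : ZMod p) = (2 : ZMod p) := by norm_cast
  rw [← h, ZMod.cast_natCast']
  norm_num

private lemma pr_sigma_X3 (t : ZMod p) :
    pr F (act p F !![1, t; 0, 1] (X 3)) = X 3 + cm p F (3 * t) * X 2 := by
  simp [act, pr, cm, map_ofNat, cast_three, cast_two]
  try ring

private lemma pr_sigma_X2 (t : ZMod p) :
    pr F (act p F !![1, t; 0, 1] (X 2)) = X 2 := by
  simp [act, pr, cm, map_ofNat, cast_three, cast_two]
  try ring

private lemma pr_comp_tau (s : ZMod p) : (pr F).comp (act p F !![1, 0; s, 1])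
    = aeval ![3 * cm p F s ^ 2 * X 2 + cm p F s ^ 3 * X 3,
              2 * cm p F s * X 2 + cm p F s ^ 2 * X 3,
              X 2 + cm p F s * X 3, X 3] := by
  apply algHom_ext
  intro i
  fin_cases i <;>
    · simp [act, pr, cm, map_ofNat, cast_three, cast_two, ZMod.cast_neg (dvd_refl p), ZMod.cast_one (dvd_refl p)]
      try ring

private lemma pr_comp_eta : (pr F).comp (act p F !![0, 1; -1, 0])
    = aeval ![-X 3, X 2, 0, 0] := by
  apply algHom_ext
  intro i
  fin_cases i <;>
    · simp [act, pr, cm, map_ofNat, cast_three, cast_two, ZMod.cast_neg (dvd_refl p), ZMod.cast_one (dvd_refl p)]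
      try ring

private lemma pr_comp_id : (pr F).comp (act p F !![1, 0; 0, 1]) = pr F := by
  apply algHom_ext
  intro i
  fin_cases i <;>
    · simp [act, pr, cm, map_ofNat, cast_three, cast_two, ZMod.cast_neg (dvd_refl p), ZMod.cast_one (dvd_refl p)]
      try ring

/-- The factor of `N` after applying the lower-triangular coset rep and the projection. -/
private lemma tau_sigma_factor (s t : ZMod p) :
    aeval ![3 * cm p F s ^ 2 * X 2 + cm p F s ^ 3 * X 3,
            2 * cm p F s * X 2 + cm p F s ^ 2 * X 3,
            X 2 + cm p F s * X 3, X 3] (act p F !![1, t; 0, 1] (X 3))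
    = cm p F (3 * t * (s * t + 1) ^ 2) * X 2 + cm p F ((s * t + 1) ^ 3) * X 3 := by
  simp [act, cm, map_ofNat, cast_three, cast_two]
  ring

private lemma sum_pow_card_sub_one : (∑ v : ZMod p, v ^ (p - 1)) = -1 := by
  have hp2 : 2 ≤ p := (Fact.out : p.Prime).two_le
  have h : ∀ v ∈ Finset.univ, v ^ (p - 1) = if v = (0 : ZMod p) then 0 else 1 := by
    intro v _
    by_cases hv : v = 0
    · simp [hv, zero_pow (by omega : p - 1 ≠ 0)]
    · simp [hv, ZMod.pow_card_sub_one_eq_one hv]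
  rw [Finset.sum_congr rfl h]
  have h2 : ∀ v ∈ Finset.univ, (if v = (0 : ZMod p) then (0 : ZMod p) else 1)
      = 1 - (if v = (0 : ZMod p) then 1 else 0) := by
    intro v _; by_cases hv : v = 0 <;> simp [hv]
  rw [Finset.sum_congr rfl h2, Finset.sum_sub_distrib]
  simp [Finset.card_univ, ZMod.natCast_self]

private lemma sum_pow_small {m : ℕ} (hm : m < p - 1) : (∑ v : ZMod p, v ^ m) = 0 := by
  have := FiniteField.sum_pow_lt_card_sub_one (K := ZMod p) m (by rwa [ZMod.card])
  exact this

/-- The key character sum: `∑_u (X₃ + u X₂)^{p-1} = -X₂^{p-1}`. -/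
private lemma sum_lin_pow : (∑ v : ZMod p, (X 3 + cm p F v * X 2) ^ (p - 1))
    = -(X 2 ^ (p - 1) : MvPolynomial (Fin 4) F) := by
  have hp2 : 2 ≤ p := (Fact.out : p.Prime).two_le
  have hpow : ∀ v : ZMod p, (X 3 + cm p F v * X 2) ^ (p - 1)
      = ∑ i ∈ Finset.range (p - 1 + 1),
          (cm p F (v ^ (p - 1 - i)) * (X 2 ^ (p - 1 - i) * X 3 ^ i * ((p-1).choose i : MvPolynomial (Fin 4) F))) := by
    intro v
    rw [add_pow]
    apply Finset.sum_congr rfl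
    intro i _
    rw [mul_pow, map_pow]
    ring
  rw [Finset.sum_congr rfl (fun v _ => hpow v), Finset.sum_comm]
  have hterm : ∀ i ∈ Finset.range (p - 1 + 1),
      (∑ v : ZMod p, cm p F (v ^ (p - 1 - i)) * (X 2 ^ (p - 1 - i) * X 3 ^ i * ((p-1).choose i : MvPolynomial (Fin 4) F)))
      = cm p F (∑ v : ZMod p, v ^ (p - 1 - i)) * (X 2 ^ (p - 1 - i) * X 3 ^ i * ((p-1).choose i : MvPolynomial (Fin 4) F)) := by
    intro i _
    rw [← Finset.sum_mul, ← map_sum]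
  rw [Finset.sum_congr rfl hterm]
  rw [Finset.sum_eq_single 0]
  · simp only [Nat.sub_zero, pow_zero, Nat.choose_zero_right, Nat.cast_one, mul_one]
    rw [sum_pow_card_sub_one, map_neg, map_one]
    simp
  · intro i _ hi
    have h0 : (∑ v : ZMod p, v ^ (p - 1 - i)) = 0 := sum_pow_small p (by omega)
    rw [h0, map_zero, zero_mul]
  · intro h
    exact absurd (Finset.mem_range.mpr (by omega)) h

private lemma sum_lin_pow3 (hp : 3 < p) :
    (∑ u : ZMod p, (X 3 + cm p F (3 * u) * X 2) ^ (p - 1))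
    = -(X 2 ^ (p - 1) : MvPolynomial (Fin 4) F) := by
  have h3 : (3 : ZMod p) ≠ 0 := by
    rw [show (3 : ZMod p) = ((3 : ℕ) : ZMod p) by norm_cast, Ne,
      ZMod.natCast_eq_zero_iff]
    intro h
    exact absurd (Nat.le_of_dvd (by norm_num) h) (by omega)
  calc (∑ u : ZMod p, (X 3 + cm p F (3 * u) * X 2) ^ (p - 1))
      = ∑ u : ZMod p, (X 3 + cm p F ((Equiv.mulLeft₀ (3 : ZMod p) h3) u) * X 2) ^ (p - 1) := by
        simp [Equiv.mulLeft₀_apply]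
    _ = ∑ v : ZMod p, (X 3 + cm p F v * X 2) ^ (p - 1) :=
        Equiv.sum_comp (Equiv.mulLeft₀ (3 : ZMod p) h3)
          (fun v : ZMod p => (X 3 + cm p F v * X 2) ^ (p - 1))
    _ = -(X 2 ^ (p - 1)) := sum_lin_pow p F

/-- Coefficients of monomials not involving `a₀, a₁` are preserved by `pr`. -/
private lemma coeff_pr (f : MvPolynomial (Fin 4) F) (d : Fin 4 →₀ ℕ)
    (h0 : d 0 = 0) (h1 : d 1 = 0) : coeff d (pr F f) = coeff d f := by
  induction f using MvPolynomial.induction_on' with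
  | add f g hf hg => rw [map_add, coeff_add, coeff_add, hf, hg]
  | monomial u a =>
    by_cases hu : u 0 = 0 ∧ u 1 = 0
    · have hu' : u = Finsupp.single 2 (u 2) + Finsupp.single 3 (u 3) := by
        ext i
        fin_cases i <;> simp [hu.1, hu.2, Finsupp.single_apply]
      have hmon : (monomial u a : MvPolynomial (Fin 4) F) = C a * X 2 ^ u 2 * X 3 ^ u 3 := by
        rw [X_pow_eq_monomial, X_pow_eq_monomial, C_mul_monomial, monomial_mul, mul_one, mul_one,
          ← hu']
      rw [hmon, map_mul, map_mul, map_pow, map_pow]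
      have hC : pr F (C a) = C a := by simp [pr]
      have h2 : pr F (X 2) = X 2 := by simp [pr]
      have h3 : pr F (X 3) = X 3 := by simp [pr]
      rw [hC, h2, h3]
    · have hz : pr F (monomial u a) = 0 := by
        rw [pr, aeval_monomial]
        apply mul_eq_zero_of_right
        rcases (by omega : u 0 ≠ 0 ∨ u 1 ≠ 0) with h | h
        · refine Finset.prod_eq_zero (Finsupp.mem_support_iff.mpr h) ?_
          simp [zero_pow h]
        · refine Finset.prod_eq_zero (Finsupp.mem_support_iff.mpr h) ?_
          simp [zero_pow h]
      rw [hz, coeff_zero, coeff_monomial, if_neg]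
      rintro rfl
      exact hu ⟨h0, h1⟩

private lemma good_mul {f g : MvPolynomial (Fin 4) F} {n m : ℕ}
    (hf : ∀ e ∈ f.support, e 0 = 0 ∧ e 1 = 0 ∧ e 2 + e 3 = n)
    (hg : ∀ e ∈ g.support, e 0 = 0 ∧ e 1 = 0 ∧ e 2 + e 3 = m) :
    ∀ e ∈ (f * g).support, e 0 = 0 ∧ e 1 = 0 ∧ e 2 + e 3 = n + m := by
  intro e he
  have h := MvPolynomial.support_mul f g he
  rw [Finset.mem_add] at h
  obtain ⟨u, hu, v, hv, rfl⟩ := h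
  obtain ⟨hu0, hu1, hu23⟩ := hf u hu
  obtain ⟨hv0, hv1, hv23⟩ := hg v hv
  refine ⟨?_, ?_, ?_⟩ <;> simp [Finsupp.add_apply, hu0, hu1, hv0, hv1] <;> omega

private lemma good_coeff_mul {f g : MvPolynomial (Fin 4) F} {n m : ℕ}
    (hf : ∀ e ∈ f.support, e 0 = 0 ∧ e 1 = 0 ∧ e 2 + e 3 = n)
    (hg : ∀ e ∈ g.support, e 0 = 0 ∧ e 1 = 0 ∧ e 2 + e 3 = m) :
    coeff (Finsupp.single 3 (n + m)) (f * g)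
      = coeff (Finsupp.single 3 n) f * coeff (Finsupp.single 3 m) g := by
  rw [coeff_mul]
  rw [Finset.sum_eq_single (Finsupp.single 3 n, Finsupp.single 3 m)]
  · intro b hb hbne
    rw [Finset.HasAntidiagonal.mem_antidiagonal] at hb
    by_contra hne0
    have hu : b.1 ∈ f.support := mem_support_iff.mpr (left_ne_zero_of_mul hne0)
    have hv : b.2 ∈ g.support := mem_support_iff.mpr (right_ne_zero_of_mul hne0)
    obtain ⟨hu0, hu1, hu23⟩ := hf b.1 hu
    obtain ⟨hv0, hv1, hv23⟩ := hg b.2 hv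
    have h2 : b.1 2 + b.2 2 = 0 := by
      have := congrArg (fun w : Fin 4 →₀ ℕ => w 2) hb
      simpa [Finsupp.single_apply] using this
    have h3 : b.1 3 + b.2 3 = n + m := by
      have := congrArg (fun w : Fin 4 →₀ ℕ => w 3) hb
      simpa [Finsupp.single_apply] using this
    apply hbne
    have hb1 : b.1 = Finsupp.single 3 n := by
      ext i
      fin_cases i <;> simp [Finsupp.single_apply] <;> omega
    have hb2 : b.2 = Finsupp.single 3 m := by
      ext i
      fin_cases i <;> simp [Finsupp.single_apply] <;> omega
    exact Prod.ext hb1 hb2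
  · intro hnot
    exact absurd (Finset.HasAntidiagonal.mem_antidiagonal.mpr (by rw [← Finsupp.single_add])) hnot

private lemma lin_good (b : ZMod p) :
    (∀ e ∈ (X 3 + cm p F b * X 2 : MvPolynomial (Fin 4) F).support,
        e 0 = 0 ∧ e 1 = 0 ∧ e 2 + e 3 = 1)
    ∧ coeff (Finsupp.single 3 1) (X 3 + cm p F b * X 2 : MvPolynomial (Fin 4) F) = 1 := by
  rw [show cm p F b = C ((ZMod.castHom (dvd_refl p) F) b) from rfl]
  constructor
  · intro e he
    have h := MvPolynomial.support_add he
    rw [Finset.mem_union] at h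
    rcases h with h | h
    · rw [support_X, Finset.mem_singleton] at h
      subst h
      refine ⟨?_, ?_, ?_⟩ <;> simp [Finsupp.single_apply]
    · rw [C_mul_X_eq_monomial] at h
      have h' := MvPolynomial.support_monomial_subset h
      rw [Finset.mem_singleton] at h'
      subst h'
      refine ⟨?_, ?_, ?_⟩ <;> simp [Finsupp.single_apply]
  · rw [coeff_add, C_mul_X_eq_monomial, coeff_monomial, if_neg, coeff_X, if_pos rfl, add_zero]
    intro h
    have := congrArg (fun w : Fin 4 →₀ ℕ => w 2) h
    simp [Finsupp.single_apply] at this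

private lemma good_one :
    (∀ e ∈ (1 : MvPolynomial (Fin 4) F).support, e 0 = 0 ∧ e 1 = 0 ∧ e 2 + e 3 = 0)
    ∧ coeff (Finsupp.single 3 0) (1 : MvPolynomial (Fin 4) F) = 1 := by
  constructor
  · intro e he
    rw [mem_support_iff] at he
    have : e = 0 := by
      by_contra hne
      rw [coeff_one, if_neg (Ne.symm hne)] at he
      exact he rfl
    subst this
    simp
  · rw [Finsupp.single_zero, coeff_zero_one]

private lemma Q_good :
    (∀ e ∈ (∏ t : ZMod p, (X 3 + cm p F (3 * t) * X 2)).support,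
        e 0 = 0 ∧ e 1 = 0 ∧ e 2 + e 3 = p)
    ∧ coeff (Finsupp.single 3 p) (∏ t : ZMod p, (X 3 + cm p F (3 * t) * X 2)) = 1 := by
  have key : ∀ s : Finset (ZMod p),
      (∀ e ∈ (∏ t ∈ s, (X 3 + cm p F (3 * t) * X 2)).support,
          e 0 = 0 ∧ e 1 = 0 ∧ e 2 + e 3 = s.card)
      ∧ coeff (Finsupp.single 3 s.card) (∏ t ∈ s, (X 3 + cm p F (3 * t) * X 2)) = 1 := by
    intro s
    induction s using Finset.induction_on with
    | empty => simpa using good_one F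
    | @insert x s hx ih =>
      rw [Finset.prod_insert hx, Finset.card_insert_of_notMem hx]
      have hlin := lin_good p F (3 * x)
      constructor
      · intro e he
        have h := good_mul F hlin.1 ih.1 e he
        exact ⟨h.1, h.2.1, by omega⟩
      · have h := good_coeff_mul F hlin.1 ih.1
        rw [hlin.2, ih.2, one_mul] at h
        rw [show s.card + 1 = 1 + s.card from by omega]
        exact h
  have h := key Finset.univ
  rwa [Finset.card_univ, ZMod.card] at h

private lemma pow_good {f : MvPolynomial (Fin 4) F} {n : ℕ}
    (hf : ∀ e ∈ f.support, e 0 = 0 ∧ e 1 = 0 ∧ e 2 + e 3 = n)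
    (hc : coeff (Finsupp.single 3 n) f = 1) (j : ℕ) :
    (∀ e ∈ (f ^ j).support, e 0 = 0 ∧ e 1 = 0 ∧ e 2 + e 3 = n * j)
    ∧ coeff (Finsupp.single 3 (n * j)) (f ^ j) = 1 := by
  induction j with
  | zero => simpa using good_one F
  | succ j ih =>
    rw [pow_succ]
    constructor
    · intro e he
      have h := good_mul F ih.1 hf e he
      exact ⟨h.1, h.2.1, by rw [h.2.2]; ring⟩
    · have h := good_coeff_mul F ih.1 hf
      rw [hc, ih.2, one_mul] at h
      rw [show n * (j + 1) = n * j + n from by ring]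
      exact h

private lemma hmul01 {f g : MvPolynomial (Fin 4) F} (hf : f.IsHomogeneous 0)
    (hg : g.IsHomogeneous 1) : (f * g).IsHomogeneous 1 := by
  simpa using hf.mul hg

private lemma hmul00 {f g : MvPolynomial (Fin 4) F} (hf : f.IsHomogeneous 0)
    (hg : g.IsHomogeneous 0) : (f * g).IsHomogeneous 0 := by
  simpa using hf.mul hg

private lemma hCpow (x : F) (e : ℕ) :
    ((C x : MvPolynomial (Fin 4) F) ^ e).IsHomogeneous 0 := by
  simpa using (isHomogeneous_C (Fin 4) x).pow e

private lemma hnum3 : ((3 : MvPolynomial (Fin 4) F)).IsHomogeneous 0 := by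
  rw [← map_ofNat (C : F →+* MvPolynomial (Fin 4) F) 3]
  exact isHomogeneous_C _ _

private lemma hnum2 : ((2 : MvPolynomial (Fin 4) F)).IsHomogeneous 0 := by
  rw [← map_ofNat (C : F →+* MvPolynomial (Fin 4) F) 2]
  exact isHomogeneous_C _ _

private lemma hlin4 {c0 c1 c2 c3 : MvPolynomial (Fin 4) F}
    (h0 : c0.IsHomogeneous 0) (h1 : c1.IsHomogeneous 0)
    (h2 : c2.IsHomogeneous 0) (h3 : c3.IsHomogeneous 0) :
    (c0 * X 0 + c1 * X 1 + c2 * X 2 + c3 * X 3).IsHomogeneous 1 :=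
  (((hmul01 F h0 (isHomogeneous_X _ _)).add (hmul01 F h1 (isHomogeneous_X _ _))).add
    (hmul01 F h2 (isHomogeneous_X _ _))).add (hmul01 F h3 (isHomogeneous_X _ _))

set_option maxHeartbeats 1000000 in
private lemma act_X_homog (g : Matrix (Fin 2) (Fin 2) (ZMod p)) (i : Fin 4) :
    (act p F g (X i)).IsHomogeneous 1 := by
  fin_cases i <;>
  · simp only [act, aeval_X, Matrix.cons_val_zero, Matrix.cons_val_one, Matrix.head_cons,
      Matrix.cons_val_two, Matrix.tail_cons, Matrix.cons_val_three]
    apply hlin4 <;>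
      repeat'
        first
          | exact hnum3 F
          | exact hnum2 F
          | exact hCpow F _ _
          | exact isHomogeneous_C _ _
          | apply IsHomogeneous.add
          | apply hmul00 F

private lemma act_homog (g : Matrix (Fin 2) (Fin 2) (ZMod p))
    {f : MvPolynomial (Fin 4) F} {n : ℕ} (hf : f.IsHomogeneous n) :
    (act p F g f).IsHomogeneous n := by
  have hact : act p F g = aeval (fun i : Fin 4 => act p F g (X i)) := by
    apply algHom_ext
    intro i
    rw [aeval_X]
  rw [hact]
  simpa using hf.aeval _ (act_X_homog p F g)

/-- The main computation: applying `pr` to the transfer kills the `η`-term and all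
`s ≠ 0` terms, leaving `-(X₂^{k+p-1} · Q^j)`. -/
private lemma key_eq (hp : 3 < p) (j k : ℕ) (hj : 1 ≤ j) :
    pr F (trBG p F (Npoly p F ^ j * trP p F (X 2 ^ k * X 3 ^ (p - 1))))
    = -(X 2 ^ (k + (p - 1)) * (∏ t : ZMod p, (X 3 + cm p F (3 * t) * X 2)) ^ j) := by
  have hj0 : j ≠ 0 := by omega
  rw [trBG, map_add, map_sum]
  have heta : pr F (act p F !![0, 1; -1, 0]
      (Npoly p F ^ j * trP p F (X 2 ^ k * X 3 ^ (p - 1)))) = 0 := by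
    rw [show pr F (act p F !![0, 1; -1, 0] (Npoly p F ^ j * trP p F (X 2 ^ k * X 3 ^ (p - 1))))
        = ((pr F).comp (act p F !![0, 1; -1, 0]))
          (Npoly p F ^ j * trP p F (X 2 ^ k * X 3 ^ (p - 1))) from rfl,
      pr_comp_eta, map_mul, map_pow]
    have hN : aeval ![(-X 3 : MvPolynomial (Fin 4) F), X 2, 0, 0] (Npoly p F) = 0 := by
      rw [Npoly, map_prod]
      apply Finset.prod_eq_zero (Finset.mem_univ (0 : ZMod p))
      have h03 : act p F !![1, (0 : ZMod p); 0, 1] (X 3) = X 3 := by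
        simp [act]
      rw [h03]
      simp
    rw [hN, zero_pow hj0, zero_mul]
  have hs0 : ∀ s : ZMod p, s ≠ 0 → pr F (act p F !![1, 0; s, 1]
      (Npoly p F ^ j * trP p F (X 2 ^ k * X 3 ^ (p - 1)))) = 0 := by
    intro s hs
    rw [show pr F (act p F !![1, 0; s, 1] (Npoly p F ^ j * trP p F (X 2 ^ k * X 3 ^ (p - 1))))
        = ((pr F).comp (act p F !![1, 0; s, 1]))
          (Npoly p F ^ j * trP p F (X 2 ^ k * X 3 ^ (p - 1))) from rfl,
      pr_comp_tau, map_mul, map_pow]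
    have hN : aeval ![3 * cm p F s ^ 2 * X 2 + cm p F s ^ 3 * X 3,
        2 * cm p F s * X 2 + cm p F s ^ 2 * X 3,
        X 2 + cm p F s * X 3, X 3] (Npoly p F) = 0 := by
      rw [Npoly, map_prod]
      apply Finset.prod_eq_zero (Finset.mem_univ (-s⁻¹))
      rw [tau_sigma_factor]
      have h1 : s * (-s⁻¹) + 1 = 0 := by field_simp; norm_num
      rw [h1]
      simp
    rw [hN, zero_pow hj0, zero_mul]
  have h0 : pr F (act p F !![1, 0; (0 : ZMod p), 1]
      (Npoly p F ^ j * trP p F (X 2 ^ k * X 3 ^ (p - 1))))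
      = -(X 2 ^ (k + (p - 1)) * (∏ t : ZMod p, (X 3 + cm p F (3 * t) * X 2)) ^ j) := by
    rw [show pr F (act p F !![1, 0; (0 : ZMod p), 1]
          (Npoly p F ^ j * trP p F (X 2 ^ k * X 3 ^ (p - 1))))
        = ((pr F).comp (act p F !![1, 0; (0 : ZMod p), 1]))
          (Npoly p F ^ j * trP p F (X 2 ^ k * X 3 ^ (p - 1))) from rfl,
      pr_comp_id, map_mul, map_pow]
    have hN : pr F (Npoly p F) = ∏ t : ZMod p, (X 3 + cm p F (3 * t) * X 2) := by
      rw [Npoly, map_prod]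
      exact Finset.prod_congr rfl (fun t _ => pr_sigma_X3 p F t)
    have hT : pr F (trP p F (X 2 ^ k * X 3 ^ (p - 1))) = -(X 2 ^ (k + (p - 1))) := by
      rw [trP, map_sum]
      have hterm : ∀ u ∈ Finset.univ, pr F (act p F !![1, u; 0, 1] (X 2 ^ k * X 3 ^ (p - 1)))
          = X 2 ^ k * (X 3 + cm p F (3 * u) * X 2) ^ (p - 1) := by
        intro u _
        simp only [map_mul, map_pow, pr_sigma_X2, pr_sigma_X3]
      rw [Finset.sum_congr rfl hterm, ← Finset.mul_sum, sum_lin_pow3 p F hp, pow_add]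
      ring
    rw [hN, hT]
    ring
  rw [Finset.sum_eq_single (0 : ZMod p) (fun s _ hs => hs0 s hs)
    (fun h => absurd (Finset.mem_univ 0) h), h0, heta, add_zero]

end Aux

/-- for `j ≥ 1` and `m = 2 + ⌊3j/(p-1)⌋`, the lead monomial of
`tr_B^G(N^j · tr^P(a₂^{(m-1)(p-1)-3j} a₃^{p-1}))` is `a₃^{pj} a₂^{m(p-1)-3j}`. -/
theorem gammafamily (p : ℕ) [Fact p.Prime] (hp : 3 < p)
    (F : Type) [Field F] [CharP F p] (j : ℕ) (hj : 1 ≤ j) :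
    LeadMonomialIs
      (trBG p F (Npoly p F ^ j *
        trP p F (X 2 ^ ((2 + 3 * j / (p - 1) - 1) * (p - 1) - 3 * j) * X 3 ^ (p - 1))))
      (Finsupp.single 3 (p * j) +
        Finsupp.single 2 ((2 + 3 * j / (p - 1)) * (p - 1) - 3 * j)) := by
  set k : ℕ := (2 + 3 * j / (p - 1) - 1) * (p - 1) - 3 * j with hkdef
  set K : ℕ := (2 + 3 * j / (p - 1)) * (p - 1) - 3 * j with hKdef
  set f : MvPolynomial (Fin 4) F :=
    trBG p F (Npoly p F ^ j * trP p F (X 2 ^ k * X 3 ^ (p - 1))) with hfdef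
  set d : Fin 4 →₀ ℕ := Finsupp.single 3 (p * j) + Finsupp.single 2 K with hddef
  -- arithmetic: K = k + (p - 1)
  have hKk : K = k + (p - 1) := by
    have h3 : (p - 1) * (3 * j / (p - 1)) + 3 * j % (p - 1) = 3 * j := Nat.div_add_mod _ _
    have h4 : 3 * j % (p - 1) < p - 1 := Nat.mod_lt _ (by omega)
    have e1 : (2 + 3 * j / (p - 1)) * (p - 1) = (p - 1) * (3 * j / (p - 1)) + 2 * (p - 1) := by
      ring
    have e2 : (2 + 3 * j / (p - 1) - 1) * (p - 1) = (p - 1) * (3 * j / (p - 1)) + (p - 1) := by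
      have h5 : 2 + 3 * j / (p - 1) - 1 = 1 + 3 * j / (p - 1) := by
        generalize 3 * j / (p - 1) = x
        omega
      rw [h5]
      ring
    rw [hKdef, hkdef, e1, e2]
    generalize (p - 1) * (3 * j / (p - 1)) = A at h3 ⊢
    omega
  -- coordinates of d
  have hd0 : d 0 = 0 := by simp [hddef, Finsupp.single_apply]
  have hd1 : d 1 = 0 := by simp [hddef, Finsupp.single_apply]
  have hd2 : d 2 = K := by simp [hddef, Finsupp.single_apply]
  have hd3 : d 3 = p * j := by simp [hddef, Finsupp.single_apply]
  -- the projected polynomial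
  have hkey : pr F f = -(X 2 ^ K * (∏ t : ZMod p, (X 3 + cm p F (3 * t) * X 2)) ^ j) := by
    rw [hfdef, key_eq p F hp j k hj, hKk]
  have hQg := Q_good p F
  have hQj := pow_good F hQg.1 hQg.2 j
  -- coefficient formula for the projection
  have hcoeffR : ∀ e : Fin 4 →₀ ℕ, coeff e (pr F f)
      = -(if Finsupp.single 2 K ≤ e
          then coeff (e - Finsupp.single 2 K)
            ((∏ t : ZMod p, (X 3 + cm p F (3 * t) * X 2)) ^ j) else 0) := by
    intro e
    rw [hkey, coeff_neg]
    congr 1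
    rw [mul_comm, X_pow_eq_monomial, coeff_mul_monomial']
    split_ifs <;> simp
  -- homogeneity
  have hHomN : (Npoly p F).IsHomogeneous p := by
    rw [Npoly]
    have h := IsHomogeneous.prod Finset.univ
      (fun t : ZMod p => act p F !![1, t; 0, 1] (X 3)) (fun _ => 1)
      (fun t _ => act_homog p F _ (isHomogeneous_X _ _))
    simpa [Finset.card_univ, ZMod.card] using h
  have hHomT : (trP p F (X 2 ^ k * X 3 ^ (p - 1))).IsHomogeneous (k + (p - 1)) := by
    rw [trP]
    apply IsHomogeneous.sum
    intro u _
    exact act_homog p F _ ((isHomogeneous_X_pow _ _).mul (isHomogeneous_X_pow _ _))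
  have hHomF : f.IsHomogeneous (p * j + (k + (p - 1))) := by
    rw [hfdef, trBG]
    apply IsHomogeneous.add
    · apply IsHomogeneous.sum
      intro s _
      exact act_homog p F _ ((hHomN.pow j).mul hHomT)
    · exact act_homog p F _ ((hHomN.pow j).mul hHomT)
  have hdeg : ∀ e ∈ f.support, (∑ i : Fin 4, e i) = p * j + (k + (p - 1)) := by
    intro e he
    have h := hHomF (mem_support_iff.mp he)
    have hw : (Finsupp.weight 1) e = ∑ i : Fin 4, e i := by
      rw [Finsupp.weight_apply, Finsupp.sum_fintype]
      · simp
      · intro i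
        simp
    rw [← hw]
    exact h
  have hsumd : (∑ i : Fin 4, d i) = p * j + (k + (p - 1)) := by
    rw [Fin.sum_univ_four, hd0, hd1, hd2, hd3, hKk]
    ring
  -- the lead coefficient
  have hsub : d - Finsupp.single 2 K = Finsupp.single 3 (p * j) := by
    ext i
    fin_cases i <;> simp [hddef, Finsupp.tsub_apply, Finsupp.single_apply]
  have hle : Finsupp.single 2 K ≤ d := by
    rw [Finsupp.le_def]
    intro i
    fin_cases i <;> simp [hddef, Finsupp.single_apply]
  have hcd : coeff d f = -1 := by
    rw [← coeff_pr F f d hd0 hd1, hcoeffR d, if_pos hle, hsub, hQj.2]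
  constructor
  · rw [hcd]
    exact neg_ne_zero.mpr one_ne_zero
  · intro e he hne
    right
    refine ⟨by rw [hdeg e he, hsumd], ?_⟩
    by_cases he0 : e 0 = 0
    · by_cases he1 : e 1 = 0
      · -- e only involves a₂, a₃ : use the projection
        have hco : coeff e f ≠ 0 := mem_support_iff.mp he
        have hpr : coeff e f = coeff e (pr F f) := (coeff_pr F f e he0 he1).symm
        rw [hpr, hcoeffR e] at hco
        have hle' : Finsupp.single 2 K ≤ e := by
          by_contra hc
          rw [if_neg hc] at hco
          simp at hco
        rw [if_pos hle'] at hco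
        have hmem : e - Finsupp.single 2 K
            ∈ ((∏ t : ZMod p, (X 3 + cm p F (3 * t) * X 2)) ^ j).support :=
          mem_support_iff.mpr (fun h => hco (by rw [h, neg_zero]))
        obtain ⟨hu0, hu1, hu23⟩ := hQj.1 _ hmem
        have he2K : K ≤ e 2 := by
          have := Finsupp.le_def.mp hle' 2
          simpa [Finsupp.single_apply] using this
        have hsub2 : (e - (Finsupp.single 2 K : Fin 4 →₀ ℕ)) 2 = e 2 - K := by
          simp [Finsupp.tsub_apply, Finsupp.single_apply]
        have hsub3 : (e - (Finsupp.single 2 K : Fin 4 →₀ ℕ)) 3 = e 3 := by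
          simp [Finsupp.tsub_apply, Finsupp.single_apply]
        rw [hsub2, hsub3] at hu23
        have hne2 : e 2 ≠ K := by
          intro h2
          apply hne
          ext i
          have hsum := hdeg e he
          rw [Fin.sum_univ_four, he0, he1, h2] at hsum
          fin_cases i
          · exact he0.trans hd0.symm
          · exact he1.trans hd1.symm
          · exact h2.trans hd2.symm
          · have h3' : e 3 = p * j := by omega
            exact h3'.trans hd3.symm
        refine ⟨2, ?_, ?_⟩
        · rw [hd2]
          omega
        · intro jj hjj
          fin_cases jj
          · exact he0.trans hd0.symm
          · exact he1.trans hd1.symm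
          · exact absurd hjj (by decide)
          · exact absurd hjj (by decide)
      · refine ⟨1, ?_, ?_⟩
        · rw [hd1]
          omega
        · intro jj hjj
          fin_cases jj
          · exact he0.trans hd0.symm
          · exact absurd hjj (by decide)
          · exact absurd hjj (by decide)
          · exact absurd hjj (by decide)
    · refine ⟨0, ?_, ?_⟩
      · rw [hd0]
        omega
      · intro jj hjj
        fin_cases jj <;> exact absurd hjj (by decide)


end
end

section
/- tr^P(a3^{p−2}) ≡ 6 a1 (3ξ)^{(p−3)/2} modulo the ideal generated by a0, where ξ = 3a2² − 4a3a1. -/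
open MvPolynomial

noncomputable section

namespace PtrlemAux

open Finset

variable {p : ℕ} [Fact p.Prime] {F : Type} [Field F] [CharP F p] {n : ℕ}

lemma zmod_sum_pow (hn : p = 2*n+3) (e : ℕ) (he : e ≤ 4*n+2) :
    (∑ s : ZMod p, s ^ e) = if e = 2*n+2 then -1 else 0 := by
  have hcard : Fintype.card (ZMod p) = p := ZMod.card p
  have hlt : ∀ i : ℕ, i < 2*n+2 → (∑ s : ZMod p, s ^ i) = 0 := by
    intro i hi
    exact FiniteField.sum_pow_lt_card_sub_one (ZMod p) i (by rw [hcard]; omega)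
  rcases eq_or_ne e (2*n+2) with rfl | hne
  · rw [if_pos rfl]
    have h01 : ∀ s : ZMod p, s ^ (2*n+2) = 1 - (if s = 0 then 1 else 0) := by
      intro s
      split_ifs with hs
      · subst hs; rw [zero_pow (by omega)]; ring
      · have h := ZMod.pow_card_sub_one_eq_one hs
        rw [show p - 1 = 2*n+2 from by omega] at h
        rw [h]; ring
    rw [Finset.sum_congr rfl fun s _ => h01 s, Finset.sum_sub_distrib,
      Finset.sum_ite_eq' Finset.univ (0 : ZMod p) (fun _ => (1 : ZMod p))]
    simp only [Finset.sum_const, Finset.card_univ, hcard, nsmul_eq_mul, mul_one,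
      Finset.mem_univ, if_pos]
    rw [ZMod.natCast_self]; ring
  · rw [if_neg hne]
    rcases lt_or_gt_of_ne hne with hlt' | hgt
    · exact hlt e hlt'
    · have hpt : ∀ s : ZMod p, s ^ e = s ^ (e - (2*n+2)) := by
        intro s
        rcases eq_or_ne s 0 with rfl | hs
        · rw [zero_pow (by omega), zero_pow (by omega)]
        · conv_lhs => rw [show e = (e - (2*n+2)) + (2*n+2) from by omega]
          rw [pow_add, show 2*n+2 = p - 1 from by omega,
            ZMod.pow_card_sub_one_eq_one hs, mul_one]
      rw [Finset.sum_congr rfl fun s _ => hpt s]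
      exact hlt _ (by omega)

lemma factCast_ne_zero {k : ℕ} (hk : k < p) : ((k.factorial : ℕ) : F) ≠ 0 := by
  rw [Ne, CharP.cast_eq_zero_iff F p]
  intro h
  have := (Nat.Prime.dvd_factorial (Fact.out : p.Prime)).mp h
  omega

lemma hchar0 (hn : p = 2*n+3) : ((2*n+3 : ℕ) : F) = 0 := by
  rw [← hn]; exact CharP.cast_eq_zero F p

lemma Wfact (hn : p = 2*n+3) : (((2*n+2).factorial : ℕ) : F) = -1 := by
  have hw := ZMod.wilsons_lemma (p := p)
  have h2 : (((p-1).factorial : ℕ) : F) = -1 := by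
    have := congrArg (ZMod.castHom (dvd_refl p) F) hw
    rwa [map_natCast, map_neg, map_one] at this
  rwa [show p - 1 = 2*n+2 from by omega] at h2

lemma W1 (hn : p = 2*n+3) : (((2*n+1).factorial : ℕ) : F) = 1 := by
  have h2 := Wfact (F := F) hn
  rw [show 2*n+2 = (2*n+1)+1 from by omega, Nat.factorial_succ] at h2
  have h0 := hchar0 (F := F) hn
  push_cast at h2 h0
  linear_combination (-1 : F) * h2 + (((2*n+1).factorial : ℕ) : F) * h0

lemma W2 (hn : p = 2*n+3) : ∀ k, k ≤ n+1 →
    (((2*k).factorial : ℕ) : F) * (((2*(n+1-k)).factorial : ℕ) : F) = -1 := by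
  intro k
  induction k with
  | zero =>
      intro _
      simp only [Nat.mul_zero, Nat.factorial_zero, Nat.cast_one, one_mul, Nat.sub_zero]
      rw [show 2*(n+1) = 2*n+2 from by ring]
      exact Wfact hn
  | succ k ih =>
      intro hk1
      have hkn : k ≤ n := by omega
      obtain ⟨j, rfl⟩ : ∃ j, n = k + j := ⟨n - k, by omega⟩
      have ihh := ih (by omega)
      have e1 : k + j + 1 - k = j + 1 := by omega
      rw [e1] at ihh
      have e2 : k + j + 1 - (k+1) = j := by omega
      rw [e2]
      have f1 : (2*(j+1)).factorial = (2*j+2) * ((2*j+1) * (2*j).factorial) := by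
        rw [show 2*(j+1) = (2*j+1)+1 from by ring, Nat.factorial_succ,
          show 2*j+1 = (2*j)+1 from rfl, Nat.factorial_succ]
      have f2 : (2*(k+1)).factorial = (2*k+2) * ((2*k+1) * (2*k).factorial) := by
        rw [show 2*(k+1) = (2*k+1)+1 from by ring, Nat.factorial_succ,
          show 2*k+1 = (2*k)+1 from rfl, Nat.factorial_succ]
      rw [f1] at ihh
      rw [f2]
      have h0 := hchar0 (F := F) hn
      push_cast at ihh h0 ⊢
      linear_combination ihh + (((2*k).factorial : ℕ) : F) * (((2*j).factorial : ℕ) : F)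
        * 2 * ((k : F) - (j : F)) * h0

lemma Mlem (hn : p = 2*n+3) : ∀ i, 1 ≤ i → i ≤ n+1 →
    (((2*i).factorial : ℕ) : F) * (((n+1-i).factorial : ℕ) : F)
      = 2 * (-4)^(i-1) * ((i.factorial : ℕ) : F) * ((n.factorial : ℕ) : F) := by
  intro i hi
  induction i, hi using Nat.le_induction with
  | base =>
      intro _
      norm_num [Nat.factorial]
  | succ i hi ih =>
      intro hi1
      have ihh := ih (by omega)
      obtain ⟨i', rfl⟩ : ∃ i', i = i' + 1 := ⟨i - 1, by omega⟩
      obtain ⟨j, hj⟩ : ∃ j, n = i' + 1 + j := ⟨n - (i'+1), by omega⟩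
      subst hj
      have e1 : i' + 1 + j + 1 - (i'+1) = j + 1 := by omega
      have e2 : i' + 1 + j + 1 - (i'+1+1) = j := by omega
      rw [e1, show i'+1-1 = i' from by omega] at ihh
      rw [e2, show i'+1+1-1 = i'+1 from by omega]
      have f1 : (2*(i'+1+1)).factorial = (2*i'+4) * ((2*i'+3) * (2*(i'+1)).factorial) := by
        rw [show 2*(i'+1+1) = (2*i'+3)+1 from by ring, Nat.factorial_succ,
          show 2*i'+3 = (2*i'+2)+1 from rfl, Nat.factorial_succ,
          show 2*(i'+1) = 2*i'+2 from by ring]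
      rw [show (j+1).factorial = (j+1) * j.factorial from rfl] at ihh
      have h0 := hchar0 (F := F) hn
      have hpow : ((-4 : F))^(i'+1) = (-4) * (-4)^i' := by rw [pow_succ]; ring
      rw [f1, Nat.factorial_succ (i'+1), hpow]
      push_cast at ihh h0 ⊢
      linear_combination (-4*((i' : F)+2)) * ihh
        + (2*((i' : F)+2) * (((2*(i'+1)).factorial : ℕ) : F) * ((j.factorial : ℕ) : F)) * h0

lemma CIm (hn : p = 2*n+3) (m : ℕ) (hm : m ≤ n) :
    -((((2*n+1).choose (n+1+m) : ℕ) : F) * (((n+1+m).choose (2*m) : ℕ) : F) * 3^(n+1+m))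
      = 6 * ((n.choose m : ℕ) : F) * 9^m * (-12)^(n-m) := by
  have hA : ((2*n+1).choose (n+1+m)) * ((n+1+m).factorial * (n-m).factorial)
      = (2*n+1).factorial := by
    have h := Nat.choose_mul_factorial_mul_factorial (show n+1+m ≤ 2*n+1 by omega)
    rw [show 2*n+1-(n+1+m) = n-m from by omega] at h
    rw [← mul_assoc]; exact h
  have hB : ((n+1+m).choose (2*m)) * ((2*m).factorial * ((n+1-m).factorial))
      = (n+1+m).factorial := by
    have h := Nat.choose_mul_factorial_mul_factorial (show 2*m ≤ n+1+m by omega)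
    rw [show n+1+m-2*m = n+1-m from by omega] at h
    rw [← mul_assoc]; exact h
  have hC : (n.choose m) * (m.factorial * (n-m).factorial) = n.factorial := by
    have h := Nat.choose_mul_factorial_mul_factorial (show m ≤ n by omega)
    rw [← mul_assoc]; exact h
  have hAF := congrArg (fun x : ℕ => (x : F)) hA
  have hBF := congrArg (fun x : ℕ => (x : F)) hB
  have hCF := congrArg (fun x : ℕ => (x : F)) hC
  push_cast at hAF hBF hCF
  rw [W1 hn] at hAF
  have hM := Mlem (F := F) hn (n+1-m) (by omega) (by omega)
  rw [show n+1-(n+1-m) = m from by omega, show n+1-m-1 = n-m from by omega] at hM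
  have hW2 := W2 (F := F) hn m (by omega)
  have h5 : (3:F)^(n+1+m) * 2 * (-4)^(n-m) = 6 * 9^m * (-12)^(n-m) := by
    rw [show n+1+m = 2*m+(n-m)+1 from by omega,
      show (9:F) = 3^2 from by norm_num, show (-12:F) = (-4)*3 from by norm_num,
      mul_pow, ← pow_mul]
    rw [pow_add, pow_add]
    ring
  have hU : (((n-m).factorial : ℕ) : F) * (((2*m).factorial : ℕ) : F)
      * (((n+1-m).factorial : ℕ) : F) * ((m.factorial : ℕ) : F)
      * (((2*(n+1-m)).factorial : ℕ) : F) ≠ 0 := by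
    apply mul_ne_zero; apply mul_ne_zero; apply mul_ne_zero; apply mul_ne_zero
    all_goals { apply factCast_ne_zero (p := p); omega }
  apply mul_right_cancel₀ hU
  calc -((((2*n+1).choose (n+1+m) : ℕ) : F) * (((n+1+m).choose (2*m) : ℕ) : F) * 3^(n+1+m))
        * ((((n-m).factorial : ℕ) : F) * (((2*m).factorial : ℕ) : F)
          * (((n+1-m).factorial : ℕ) : F) * ((m.factorial : ℕ) : F)
          * (((2*(n+1-m)).factorial : ℕ) : F))
      = -(3:F)^(n+1+m) * ((((2*n+1).choose (n+1+m) : ℕ) : F)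
          * ((((n+1+m).factorial : ℕ) : F) * (((n-m).factorial : ℕ) : F)))
          * (((m.factorial : ℕ) : F) * (((2*(n+1-m)).factorial : ℕ) : F)) := by
        linear_combination (-(3:F)^(n+1+m) * (((2*n+1).choose (n+1+m) : ℕ) : F)
          * (((n-m).factorial : ℕ) : F) * ((m.factorial : ℕ) : F)
          * (((2*(n+1-m)).factorial : ℕ) : F)) * hBF
    _ = -(3:F)^(n+1+m) * ((((2*(n+1-m)).factorial : ℕ) : F) * ((m.factorial : ℕ) : F)) := by
        rw [hAF]; ring
    _ = -(3:F)^(n+1+m) * (2 * (-4)^(n-m) * (((n+1-m).factorial : ℕ) : F)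
          * ((n.factorial : ℕ) : F)) := by rw [hM]
    _ = -(6 * 9^m * (-12)^(n-m)) * ((((n+1-m).factorial : ℕ) : F) * ((n.factorial : ℕ) : F)) := by
        linear_combination (-((((n+1-m).factorial : ℕ) : F) * ((n.factorial : ℕ) : F))) * h5
    _ = 6 * 9^m * (-12)^(n-m) * (((n+1-m).factorial : ℕ) : F) * ((n.factorial : ℕ) : F)
          * ((((2*m).factorial : ℕ) : F) * (((2*(n+1-m)).factorial : ℕ) : F)) := by
        rw [hW2]; ring
    _ = 6 * ((n.choose m : ℕ) : F) * 9^m * (-12)^(n-m)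
        * ((((n-m).factorial : ℕ) : F) * (((2*m).factorial : ℕ) : F)
          * (((n+1-m).factorial : ℕ) : F) * ((m.factorial : ℕ) : F)
          * (((2*(n+1-m)).factorial : ℕ) : F)) := by
        rw [← hCF]; ring

def phi0 (F : Type) [Field F] : MvPolynomial (Fin 4) F →ₐ[F] MvPolynomial (Fin 4) F :=
  aeval (fun j : Fin 4 => if j = 0 then 0 else X j)

@[simp] lemma phi0_X0 : phi0 F (X 0) = 0 := by simp [phi0]
@[simp] lemma phi0_X1 : phi0 F (X 1) = X 1 := by simp [phi0]
@[simp] lemma phi0_X2 : phi0 F (X 2) = X 2 := by simp [phi0]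
@[simp] lemma phi0_X3 : phi0 F (X 3) = X 3 := by simp [phi0]
@[simp] lemma phi0_C (a : F) : phi0 F (C a) = C a := by simp [phi0]

lemma X0_dvd_sub_phi0 (f : MvPolynomial (Fin 4) F) : X 0 ∣ f - phi0 F f := by
  induction f using MvPolynomial.induction_on with
  | C a => simp
  | add f g hf hg =>
      rw [map_add, show f + g - (phi0 F f + phi0 F g) = (f - phi0 F f) + (g - phi0 F g) by ring]
      exact dvd_add hf hg
  | mul_X f i hf =>
      rw [map_mul]
      rcases eq_or_ne i 0 with rfl | hi
      · rw [phi0_X0, mul_zero, sub_zero]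
        exact Dvd.intro_left f rfl
      · have hXi : phi0 F (X i) = X i := by
          simp [phi0, aeval_X, hi]
        rw [hXi, show f * X i - phi0 F f * X i = (f - phi0 F f) * X i by ring]
        exact hf.mul_right _

lemma act_X3 (s : ZMod p) : act p F !![1, s; 0, 1] (X 3) =
    (C (ZMod.castHom (dvd_refl p) F s))^3 * X 0 + 3 * (C (ZMod.castHom (dvd_refl p) F s))^2 * X 1
      + 3 * (C (ZMod.castHom (dvd_refl p) F s)) * X 2 + X 3 := by
  simp [act, Matrix.cons_val_zero, Matrix.cons_val_one, Matrix.head_cons, Matrix.cons_val',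
    Matrix.head_fin_const, Matrix.empty_val', Matrix.cons_val_fin_one, Matrix.cons_val_three]

lemma mainsum (hn : p = 2*n+3) :
    ∑ s : ZMod p, (X 3 + C (ZMod.castHom (dvd_refl p) F s) * (3*X 2)
        + (C (ZMod.castHom (dvd_refl p) F s))^2 * (3*X 1))^(2*n+1)
      = 6 * X 1 * (3 * xipoly F)^n := by
  have hsum_cs : ∀ e : ℕ, e ≤ 4*n+2 →
      (∑ s : ZMod p, (C (ZMod.castHom (dvd_refl p) F s) : MvPolynomial (Fin 4) F) ^ e)
        = if e = 2*n+2 then -1 else 0 := by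
    intro e he
    have h1 : (∑ s : ZMod p, (C (ZMod.castHom (dvd_refl p) F s) : MvPolynomial (Fin 4) F) ^ e)
        = C (ZMod.castHom (dvd_refl p) F (∑ s : ZMod p, s ^ e)) := by
      rw [map_sum, map_sum]
      exact Finset.sum_congr rfl fun s _ => by rw [map_pow, map_pow]
    rw [h1, zmod_sum_pow hn e he]
    split_ifs
    · rw [map_neg, map_one, map_neg, map_one]
    · rw [map_zero, map_zero]
  have expand : ∀ s : ZMod p,
      (X 3 + C (ZMod.castHom (dvd_refl p) F s) * (3*X 2)
          + (C (ZMod.castHom (dvd_refl p) F s))^2 * (3*X 1))^(2*n+1)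
        = ∑ k ∈ range (2*n+2), ∑ l ∈ range (k+1),
            (C (ZMod.castHom (dvd_refl p) F s) : MvPolynomial (Fin 4) F) ^ (l + 2*(k-l)) *
              ((3*X 2)^l * (3*X 1)^(k-l) * ((k.choose l : ℕ) : MvPolynomial (Fin 4) F)
                * (X 3)^(2*n+1-k) * (((2*n+1).choose k : ℕ) : MvPolynomial (Fin 4) F)) := by
    intro s
    rw [show (X 3 + C (ZMod.castHom (dvd_refl p) F s) * (3*X 2)
        + (C (ZMod.castHom (dvd_refl p) F s))^2 * (3*X 1) : MvPolynomial (Fin 4) F)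
        = (C (ZMod.castHom (dvd_refl p) F s) * (3*X 2)
            + (C (ZMod.castHom (dvd_refl p) F s))^2 * (3*X 1)) + X 3 from by ring, add_pow]
    refine Finset.sum_congr rfl fun k hk => ?_
    rw [add_pow, Finset.sum_mul, Finset.sum_mul]
    refine Finset.sum_congr rfl fun l hl => ?_
    rw [pow_add, pow_mul]
    ring
  calc ∑ s : ZMod p, (X 3 + C (ZMod.castHom (dvd_refl p) F s) * (3*X 2)
          + (C (ZMod.castHom (dvd_refl p) F s))^2 * (3*X 1))^(2*n+1)
      = ∑ s : ZMod p, ∑ k ∈ range (2*n+2), ∑ l ∈ range (k+1),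
          (C (ZMod.castHom (dvd_refl p) F s) : MvPolynomial (Fin 4) F) ^ (l + 2*(k-l)) *
            ((3*X 2)^l * (3*X 1)^(k-l) * ((k.choose l : ℕ) : MvPolynomial (Fin 4) F)
              * (X 3)^(2*n+1-k) * (((2*n+1).choose k : ℕ) : MvPolynomial (Fin 4) F)) :=
        Finset.sum_congr rfl fun s _ => expand s
    _ = ∑ k ∈ range (2*n+2), ∑ l ∈ range (k+1),
          (∑ s : ZMod p, (C (ZMod.castHom (dvd_refl p) F s) : MvPolynomial (Fin 4) F) ^ (l + 2*(k-l))) *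
            ((3*X 2)^l * (3*X 1)^(k-l) * ((k.choose l : ℕ) : MvPolynomial (Fin 4) F)
              * (X 3)^(2*n+1-k) * (((2*n+1).choose k : ℕ) : MvPolynomial (Fin 4) F)) := by
        rw [Finset.sum_comm]
        refine Finset.sum_congr rfl fun k _ => ?_
        rw [Finset.sum_comm]
        exact Finset.sum_congr rfl fun l _ => by rw [Finset.sum_mul]
    _ = ∑ k ∈ range (2*n+2), ∑ l ∈ range (k+1),
          (if l + 2*(k-l) = 2*n+2 then (-1 : MvPolynomial (Fin 4) F) else 0) *
            ((3*X 2)^l * (3*X 1)^(k-l) * ((k.choose l : ℕ) : MvPolynomial (Fin 4) F)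
              * (X 3)^(2*n+1-k) * (((2*n+1).choose k : ℕ) : MvPolynomial (Fin 4) F)) :=
        Finset.sum_congr rfl fun k hk => Finset.sum_congr rfl fun l hl => by
          rw [hsum_cs _ (by simp only [mem_range] at hk hl; omega)]
    _ = ∑ j ∈ range (n+1),
          (-1 : MvPolynomial (Fin 4) F) *
            ((3*X 2)^(2*j) * (3*X 1)^(n+1+j-2*j) * (((n+1+j).choose (2*j) : ℕ) : MvPolynomial (Fin 4) F)
              * (X 3)^(2*n+1-(n+1+j)) * (((2*n+1).choose (n+1+j) : ℕ) : MvPolynomial (Fin 4) F)) := by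
        rw [show range (2*n+2) = Ico 0 (2*n+2) from Finset.range_eq_Ico (2*n+2),
          ← Finset.sum_Ico_consecutive _ (Nat.zero_le (n+1)) (show n+1 ≤ 2*n+2 by omega)]
        have hz : (∑ k ∈ Ico 0 (n+1), ∑ l ∈ range (k+1),
            (if l + 2*(k-l) = 2*n+2 then (-1 : MvPolynomial (Fin 4) F) else 0) *
              ((3*X 2)^l * (3*X 1)^(k-l) * ((k.choose l : ℕ) : MvPolynomial (Fin 4) F)
                * (X 3)^(2*n+1-k) * (((2*n+1).choose k : ℕ) : MvPolynomial (Fin 4) F))) = 0 :=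
          Finset.sum_eq_zero fun k hk => Finset.sum_eq_zero fun l hl => by
            rw [if_neg (by simp only [mem_range] at hl; simp only [mem_Ico] at hk; omega), zero_mul]
        rw [hz, zero_add, Finset.sum_Ico_eq_sum_range, show 2*n+2-(n+1) = n+1 from by omega]
        refine Finset.sum_congr rfl fun j hj => ?_
        have hjn : j ≤ n := by have := mem_range.mp hj; omega
        rw [Finset.sum_eq_single (2*j)
          (fun l hl hlne => by
            rw [if_neg (by simp only [mem_range] at hl; omega), zero_mul])
          (fun habs => absurd (mem_range.mpr (by omega)) habs)]
        rw [if_pos (by omega)]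
    _ = 6 * X 1 * (3 * xipoly F)^n := by
        rw [show (3 * xipoly F : MvPolynomial (Fin 4) F)
            = (3*X 2)^2 + (-12)*(X 3*X 1) from by rw [xipoly]; ring, add_pow, Finset.mul_sum]
        refine Finset.sum_congr rfl fun j hj => ?_
        have hjn : j ≤ n := by have := mem_range.mp hj; omega
        have hCI := CIm (F := F) hn j hjn
        have hR := congrArg (⇑(C : F →+* MvPolynomial (Fin 4) F)) hCI
        simp only [map_neg, map_mul, map_pow, map_natCast, map_ofNat] at hR
        simp only [show n+1+j-2*j = (n-j)+1 from by omega,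
          show 2*n+1-(n+1+j) = n-j from by omega]
        set c1 := (2*n+1).choose (n+1+j) with hc1
        set c2 := (n+1+j).choose (2*j) with hc2
        rw [show n+1+j = 2*j + ((n-j)+1) from by omega] at hR
        linear_combination (X 2^(2*j) * X 1^((n-j)+1) * X 3^(n-j)) * hR

end PtrlemAux

/-- `tr^P(a₃^{p-2}) ≡ 6 a₁ (3ξ)^{(p-3)/2}` modulo the ideal `(a₀)`,
where `ξ = 3a₂² - 4a₃a₁`. -/
theorem Ptrlem (p : ℕ) [Fact p.Prime] (hp : 3 < p)
    (F : Type) [Field F] [CharP F p] :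
    X 0 ∣ (trP p F (X 3 ^ (p - 2)) - 6 * X 1 * (3 * xipoly F) ^ ((p - 3) / 2)) := by
  have hprime : p.Prime := Fact.out
  obtain ⟨n, hn⟩ : ∃ n, p = 2*n+3 := by
    rcases hprime.eq_two_or_odd with h | h
    · omega
    · exact ⟨(p-3)/2, by omega⟩
  subst hn
  simp only [show 2*n+3-2 = 2*n+1 from by omega, show (2*n+3-3)/2 = n from by omega]
  have hphi : ∀ s : ZMod (2*n+3),
      PtrlemAux.phi0 F (act (2*n+3) F !![1, s; 0, 1] (X 3 ^ (2*n+1)))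
        = (X 3 + C (ZMod.castHom (dvd_refl (2*n+3)) F s) * (3*X 2)
            + (C (ZMod.castHom (dvd_refl (2*n+3)) F s))^2 * (3*X 1))^(2*n+1) := by
    intro s
    have h1 : act (2*n+3) F !![1, s; 0, 1] (X 3 ^ (2*n+1))
        = ((C (ZMod.castHom (dvd_refl (2*n+3)) F s))^3 * X 0
            + 3*(C (ZMod.castHom (dvd_refl (2*n+3)) F s))^2 * X 1
            + 3*(C (ZMod.castHom (dvd_refl (2*n+3)) F s)) * X 2 + X 3)^(2*n+1) := by
      rw [map_pow, PtrlemAux.act_X3]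
    rw [h1, map_pow]
    congr 1
    simp only [map_add, map_mul, map_pow, PtrlemAux.phi0_X0, PtrlemAux.phi0_X1,
      PtrlemAux.phi0_X2, PtrlemAux.phi0_X3, PtrlemAux.phi0_C, map_ofNat]
    ring
  have key : PtrlemAux.phi0 F (trP (2*n+3) F (X 3 ^ (2*n+1))) = 6 * X 1 * (3 * xipoly F)^n := by
    simp only [trP, map_sum]
    rw [Finset.sum_congr rfl fun s _ => hphi s]
    exact PtrlemAux.mainsum (p := 2*n+3) (n := n) rfl
  have hd := PtrlemAux.X0_dvd_sub_phi0 (trP (2*n+3) F (X 3 ^ (2*n+1)))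
  rw [key] at hd
  exact hd


end
end
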